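/- Let Γ be a discrete subgroup of GL_n(ℂ) containing a finitely generated subgroup Γ' of exponential growth. Then Γ, as a subset of M_n(ℂ) ≅ ℝ^{2n²} with the Euclidean metric, has positive Assouad dimension. -/

import Mathlib

open Matrix
open scoped Matrix.Norms.L2Operator Pointwise

/-- The separation of a subset of a metric space: the infimum of distances between
distinct points. -/
noncomputable def sepDist {X : Type*} [MetricSpace X] (A : Set X) : ℝ :=
  sInf {r : ℝ | ∃ a ∈ A, ∃ b ∈ A, a ≠ b ∧ r = dist a b}

section Aux

variable {n : ℕ}

/-- Discreteness gives a uniform separation of `Γ` from the identity, measured with both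
the matrix and its inverse. -/
lemma exists_discrete_eps (Γ : Subgroup (GL (Fin n) ℂ)) [DiscreteTopology Γ] :
    ∃ ε : ℝ, 0 < ε ∧ ∀ g : GL (Fin n) ℂ, g ∈ Γ →
      dist (g : Matrix (Fin n) (Fin n) ℂ) 1 < ε →
      dist ((g⁻¹ : GL (Fin n) ℂ) : Matrix (Fin n) (Fin n) ℂ) 1 < ε → g = 1 := by
  have h1 : ({1} : Set Γ) ∈ nhds (1 : Γ) :=
    (isOpen_discrete ({1} : Set Γ)).mem_nhds rfl
  rw [nhds_subtype] at h1
  have hGL : nhds ((1 : Γ) : GL (Fin n) ℂ) =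
      Filter.comap (Units.embedProduct (Matrix (Fin n) (Fin n) ℂ))
        (nhds (Units.embedProduct (Matrix (Fin n) (Fin n) ℂ) ((1 : Γ) : GL (Fin n) ℂ))) :=
    Units.isInducing_embedProduct.nhds_eq_comap _
  rw [hGL, Filter.comap_comap] at h1
  have hone : Units.embedProduct (Matrix (Fin n) (Fin n) ℂ) ((1 : Γ) : GL (Fin n) ℂ)
      = ((1 : Matrix (Fin n) (Fin n) ℂ), (1 : (Matrix (Fin n) (Fin n) ℂ)ᵐᵒᵖ)) := by
    simp
  rw [hone, nhds_prod_eq] at h1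
  obtain ⟨W, hW, hWsub⟩ := Filter.mem_comap.mp h1
  obtain ⟨U, hU, V, hV, hUV⟩ := Filter.mem_prod_iff.mp hW
  have hV' : (MulOpposite.op) ⁻¹' V ∈ nhds (1 : Matrix (Fin n) (Fin n) ℂ) := by
    have : (1 : (Matrix (Fin n) (Fin n) ℂ)ᵐᵒᵖ) = MulOpposite.op 1 := rfl
    rw [this, ← MulOpposite.map_op_nhds] at hV
    exact Filter.mem_map.mp hV
  obtain ⟨ε1, hε1, hball1⟩ := Metric.mem_nhds_iff.mp hU
  obtain ⟨ε2, hε2, hball2⟩ := Metric.mem_nhds_iff.mp hV'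
  refine ⟨min ε1 ε2, lt_min hε1 hε2, ?_⟩
  intro g hg hd1 hd2
  have hmem : Units.embedProduct (Matrix (Fin n) (Fin n) ℂ) g ∈ U ×ˢ V := by
    rw [Units.embedProduct_apply]
    constructor
    · exact hball1 (Metric.mem_ball.mpr (lt_of_lt_of_le hd1 (min_le_left _ _)))
    · have : ((g⁻¹ : GL (Fin n) ℂ) : Matrix (Fin n) (Fin n) ℂ) ∈
          (MulOpposite.op) ⁻¹' V :=
        hball2 (Metric.mem_ball.mpr (lt_of_lt_of_le hd2 (min_le_right _ _)))
      exact this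
  have hmem2 : (⟨g, hg⟩ : Γ) ∈ (fun γ : Γ =>
      Units.embedProduct (Matrix (Fin n) (Fin n) ℂ) (Subtype.val γ)) ⁻¹' W :=
    hUV hmem
  have := hWsub hmem2
  simpa [Subtype.ext_iff] using this

lemma pow_subset_closure {G : Type*} [Group G] (S : Set G) (m : ℕ) :
    (S ^ m : Set G) ⊆ (Subgroup.closure S : Subgroup G) := by
  induction m with
  | zero =>
    rw [pow_zero]
    intro x hx
    rw [Set.mem_one] at hx
    subst hx
    exact one_mem _
  | succ k ih =>
    rw [pow_succ]
    rintro x ⟨a, ha, b, hb, rfl⟩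
    exact mul_mem (ih ha) (Subgroup.subset_closure hb)

lemma set_pow_finite {G : Type*} [Group G] {S : Set G} (hfin : S.Finite) (m : ℕ) :
    (S ^ m : Set G).Finite := by
  induction m with
  | zero => rw [pow_zero]; exact Set.finite_one
  | succ k ih => rw [pow_succ]; exact ih.mul hfin

lemma norm_le_pow {S : Set (GL (Fin n) ℂ)} {R : ℝ} (hR : 1 ≤ R)
    (hS : ∀ s ∈ S, ‖(s : Matrix (Fin n) (Fin n) ℂ)‖ ≤ R ∧
      ‖((s⁻¹ : GL (Fin n) ℂ) : Matrix (Fin n) (Fin n) ℂ)‖ ≤ R) :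
    ∀ m : ℕ, ∀ g ∈ S ^ (m + 1),
      ‖(g : Matrix (Fin n) (Fin n) ℂ)‖ ≤ R ^ (m + 1) ∧
      ‖((g⁻¹ : GL (Fin n) ℂ) : Matrix (Fin n) (Fin n) ℂ)‖ ≤ R ^ (m + 1) := by
  intro m
  induction m with
  | zero =>
    intro g hg
    rw [pow_one] at hg ⊢
    exact hS g hg
  | succ k ih =>
    intro g hg
    rw [pow_succ] at hg
    obtain ⟨a, ha, b, hb, rfl⟩ := hg
    obtain ⟨ha1, ha2⟩ := ih a ha
    obtain ⟨hb1, hb2⟩ := hS b hb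
    have hRk : (0:ℝ) ≤ R ^ (k + 1) := le_trans zero_le_one (one_le_pow₀ hR)
    constructor
    · calc ‖((a * b : GL (Fin n) ℂ) : Matrix (Fin n) (Fin n) ℂ)‖
          = ‖(a : Matrix (Fin n) (Fin n) ℂ) * (b : Matrix (Fin n) (Fin n) ℂ)‖ := by
            rw [Units.val_mul]
        _ ≤ ‖(a : Matrix (Fin n) (Fin n) ℂ)‖ * ‖(b : Matrix (Fin n) (Fin n) ℂ)‖ := norm_mul_le _ _
        _ ≤ R ^ (k + 1) * R := by
            apply mul_le_mul ha1 hb1 (norm_nonneg _) hRk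
        _ = R ^ (k + 1 + 1) := by ring
    · calc ‖(((a * b)⁻¹ : GL (Fin n) ℂ) : Matrix (Fin n) (Fin n) ℂ)‖
          = ‖((b⁻¹ : GL (Fin n) ℂ) : Matrix (Fin n) (Fin n) ℂ) *
              ((a⁻¹ : GL (Fin n) ℂ) : Matrix (Fin n) (Fin n) ℂ)‖ := by
            rw [_root_.mul_inv_rev, Units.val_mul]
        _ ≤ ‖((b⁻¹ : GL (Fin n) ℂ) : Matrix (Fin n) (Fin n) ℂ)‖ *
              ‖((a⁻¹ : GL (Fin n) ℂ) : Matrix (Fin n) (Fin n) ℂ)‖ := norm_mul_le _ _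
        _ ≤ R * R ^ (k + 1) := by
            apply mul_le_mul hb2 ha2 (norm_nonneg _) (le_trans zero_le_one hR)
        _ = R ^ (k + 1 + 1) := by ring

end Aux

/-- If a discrete subgroup `Γ` of `GL_n(ℂ)` contains a finitely generated subgroup `Γ'` of
exponential growth, then `Γ`, viewed as a subset of the space of matrices (with a metric
bi-Lipschitz to the Euclidean one), has positive Assouad dimension: some `β₀ > 0` bounds
from below the infimum defining the Assouad dimension. -/
theorem discrete_expGrowth_positive_assouad {n : ℕ} (Γ : Subgroup (GL (Fin n) ℂ))
    [DiscreteTopology Γ]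
    (Γ' : Subgroup (GL (Fin n) ℂ)) (hle : Γ' ≤ Γ)
    (S : Set (GL (Fin n) ℂ)) (hfin : S.Finite) (hsym : S⁻¹ = S)
    (hgen : Subgroup.closure S = Γ')
    (C : ℝ) (hC : 1 < C) (hgrowth : ∀ m : ℕ, 1 ≤ m → C ^ m ≤ ((S ^ m).ncard : ℝ)) :
    ∃ β₀ : ℝ, 0 < β₀ ∧ ∀ β K : ℝ, 0 < β → β < β₀ → 0 < K →
      ∃ A : Set (Matrix (Fin n) (Fin n) ℂ),
        A ⊆ {M | ∃ g ∈ Γ, (g : Matrix (Fin n) (Fin n) ℂ) = M} ∧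
        A.Finite ∧ Bornology.IsBounded A ∧ 0 < sepDist A ∧ 2 ≤ A.ncard ∧
        K * (Metric.diam A / sepDist A) ^ β < (A.ncard : ℝ) := by
  classical
  obtain ⟨ε, hε, hdisc⟩ := exists_discrete_eps Γ
  -- a bound on the norms of generators and their inverses
  obtain ⟨R0, hR0⟩ : ∃ R0 : ℝ, ∀ s ∈ S,
      max ‖(s : Matrix (Fin n) (Fin n) ℂ)‖
        ‖((s⁻¹ : GL (Fin n) ℂ) : Matrix (Fin n) (Fin n) ℂ)‖ ≤ R0 := by
    obtain ⟨R0, hR0⟩ := (hfin.image (fun s : GL (Fin n) ℂ =>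
      max ‖(s : Matrix (Fin n) (Fin n) ℂ)‖
        ‖((s⁻¹ : GL (Fin n) ℂ) : Matrix (Fin n) (Fin n) ℂ)‖)).bddAbove
    exact ⟨R0, fun s hs => hR0 (Set.mem_image_of_mem _ hs)⟩
  set R : ℝ := max R0 2 with hRdef
  have hR2 : (2:ℝ) ≤ R := le_max_right _ _
  have hR1 : (1:ℝ) ≤ R := by linarith
  have hRpos : (0:ℝ) < R := by linarith
  have hlogR : 0 < Real.log R := Real.log_pos (by linarith)
  have hlogC : 0 < Real.log C := Real.log_pos hC
  have hSbound : ∀ s ∈ S, ‖(s : Matrix (Fin n) (Fin n) ℂ)‖ ≤ R ∧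
      ‖((s⁻¹ : GL (Fin n) ℂ) : Matrix (Fin n) (Fin n) ℂ)‖ ≤ R := by
    intro s hs
    have := hR0 s hs
    exact ⟨le_trans (le_max_left _ _) (le_trans this (le_max_left _ _)),
           le_trans (le_max_right _ _) (le_trans this (le_max_left _ _))⟩
  refine ⟨Real.log C / (2 * Real.log R), div_pos hlogC (by linarith), ?_⟩
  intro β K hβ hββ0 hK
  -- choose m large
  set a : ℝ := Real.log C - β * (2 * Real.log R) with ha_def
  have ha : 0 < a := by
    have h1 : β * (2 * Real.log R) < (Real.log C / (2 * Real.log R)) * (2 * Real.log R) :=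
      mul_lt_mul_of_pos_right hββ0 (by linarith)
    rw [div_mul_cancel₀ _ (by linarith : (2 * Real.log R) ≠ 0)] at h1
    simp only [ha_def]
    linarith
  set x : ℝ := Real.log K + β * Real.log (2 / ε) with hx_def
  obtain ⟨m0, hm0⟩ := exists_nat_gt (x / a)
  set m : ℕ := m0 + 1 with hm_def
  have hm1 : 1 ≤ m := Nat.le_add_left 1 m0
  have hmx : x < (m : ℝ) * a := by
    have h1 : x / a < (m : ℝ) := lt_of_lt_of_le hm0 (by exact_mod_cast Nat.le_succ m0)
    calc x = (x / a) * a := by field_simp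
    _ < (m : ℝ) * a := mul_lt_mul_of_pos_right h1 ha
  have hRm_pos : (0:ℝ) < R ^ m := pow_pos hRpos m
  have hRm1 : (1:ℝ) ≤ R ^ m := one_le_pow₀ hR1
  -- the set A
  set A : Set (Matrix (Fin n) (Fin n) ℂ) :=
    (fun g : GL (Fin n) ℂ => (g : Matrix (Fin n) (Fin n) ℂ)) '' (S ^ m) with hA_def
  have hval_inj : Function.Injective (fun g : GL (Fin n) ℂ =>
      (g : Matrix (Fin n) (Fin n) ℂ)) := fun _ _ e => Units.ext e
  have hncard : A.ncard = (S ^ m).ncard := Set.ncard_image_of_injective _ hval_inj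
  have hmemΓ : ∀ g ∈ S ^ m, g ∈ Γ := by
    intro g hg
    exact hle (hgen ▸ pow_subset_closure S m hg)
  have hbound := norm_le_pow hR1 hSbound m0
  rw [← hm_def] at hbound
  have hfinA : A.Finite := (set_pow_finite hfin m).image _
  have hCm : C ^ m ≤ (A.ncard : ℝ) := by rw [hncard]; exact hgrowth m hm1
  have hCmpos : (0:ℝ) < C ^ m := pow_pos (by linarith) m
  have hA2 : 2 ≤ A.ncard := by
    have h1 : (1:ℝ) < (A.ncard : ℝ) :=
      lt_of_lt_of_le (lt_of_lt_of_le hC (le_self_pow₀ (le_of_lt hC) (by omega))) hCm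
    exact_mod_cast Nat.one_lt_cast.mp h1
  -- norms of elements of A
  have hnormA : ∀ x ∈ A, ‖x‖ ≤ R ^ m := by
    rintro x ⟨g, hg, rfl⟩
    exact (hbound g hg).1
  -- diameter bound
  have hdiam : Metric.diam A ≤ 2 * R ^ m := by
    apply Metric.diam_le_of_forall_dist_le (by positivity)
    intro x hx y hy
    calc dist x y ≤ ‖x‖ + ‖y‖ := dist_le_norm_add_norm _ _
    _ ≤ R ^ m + R ^ m := add_le_add (hnormA x hx) (hnormA y hy)
    _ = 2 * R ^ m := by ring
  -- separation bound
  have hsep : ∀ x ∈ A, ∀ y ∈ A, x ≠ y → ε / R ^ m ≤ dist x y := by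
    rintro _ ⟨g, hg, rfl⟩ _ ⟨h, hh, rfl⟩ hne
    have hgh : g ≠ h := fun e => hne (by rw [e])
    set k : GL (Fin n) ℂ := g⁻¹ * h with hk_def
    have hkΓ : k ∈ Γ := mul_mem (inv_mem (hmemΓ g hg)) (hmemΓ h hh)
    have hk1 : k ≠ 1 := fun e => hgh (inv_mul_eq_one.mp e)
    set d : ℝ := dist ((g : Matrix (Fin n) (Fin n) ℂ)) ((h : Matrix (Fin n) (Fin n) ℂ)) with hd_def
    have hd0 : 0 ≤ d := dist_nonneg
    have key : ε ≤ R ^ m * d := by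
      rcases le_or_gt ε (dist ((k : GL (Fin n) ℂ) : Matrix (Fin n) (Fin n) ℂ)
          (1 : Matrix (Fin n) (Fin n) ℂ)) with hcase | hcase
      · -- ε ≤ ‖k - 1‖ = ‖g⁻¹ (h - g)‖
        have heq : ((k : GL (Fin n) ℂ) : Matrix (Fin n) (Fin n) ℂ) - 1 =
            ((g⁻¹ : GL (Fin n) ℂ) : Matrix (Fin n) (Fin n) ℂ) *
              ((h : Matrix (Fin n) (Fin n) ℂ) - (g : Matrix (Fin n) (Fin n) ℂ)) := by
          rw [mul_sub, ← Units.val_mul, ← Units.val_mul, ← hk_def, inv_mul_cancel,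
            Units.val_one]
        have h1 : ε ≤ ‖((g⁻¹ : GL (Fin n) ℂ) : Matrix (Fin n) (Fin n) ℂ)‖ *
            ‖(h : Matrix (Fin n) (Fin n) ℂ) - (g : Matrix (Fin n) (Fin n) ℂ)‖ := by
          calc ε ≤ dist ((k : GL (Fin n) ℂ) : Matrix (Fin n) (Fin n) ℂ) 1 := hcase
          _ = ‖((k : GL (Fin n) ℂ) : Matrix (Fin n) (Fin n) ℂ) - 1‖ := dist_eq_norm _ _
          _ = ‖((g⁻¹ : GL (Fin n) ℂ) : Matrix (Fin n) (Fin n) ℂ) *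
                ((h : Matrix (Fin n) (Fin n) ℂ) - (g : Matrix (Fin n) (Fin n) ℂ))‖ := by
                rw [heq]
          _ ≤ _ := norm_mul_le _ _
        have h2 : ‖(h : Matrix (Fin n) (Fin n) ℂ) - (g : Matrix (Fin n) (Fin n) ℂ)‖ = d := by
          rw [hd_def, dist_eq_norm, norm_sub_rev]
        calc ε ≤ ‖((g⁻¹ : GL (Fin n) ℂ) : Matrix (Fin n) (Fin n) ℂ)‖ *
            ‖(h : Matrix (Fin n) (Fin n) ℂ) - (g : Matrix (Fin n) (Fin n) ℂ)‖ := h1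
        _ ≤ R ^ m * d := by
            rw [h2]
            exact mul_le_mul_of_nonneg_right (hbound g hg).2 hd0
      · -- then ε ≤ ‖k⁻¹ - 1‖ = ‖h⁻¹ (g - h)‖
        have hcase2 : ε ≤ dist (((k⁻¹ : GL (Fin n) ℂ)) : Matrix (Fin n) (Fin n) ℂ)
            (1 : Matrix (Fin n) (Fin n) ℂ) := by
          by_contra hcon
          push_neg at hcon
          exact hk1 (hdisc k hkΓ hcase hcon)
        have heq : ((k⁻¹ : GL (Fin n) ℂ) : Matrix (Fin n) (Fin n) ℂ) - 1 =
            ((h⁻¹ : GL (Fin n) ℂ) : Matrix (Fin n) (Fin n) ℂ) *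
              ((g : Matrix (Fin n) (Fin n) ℂ) - (h : Matrix (Fin n) (Fin n) ℂ)) := by
          rw [mul_sub, ← Units.val_mul, ← Units.val_mul, hk_def, _root_.mul_inv_rev, inv_inv,
            inv_mul_cancel, Units.val_one]
        have h1 : ε ≤ ‖((h⁻¹ : GL (Fin n) ℂ) : Matrix (Fin n) (Fin n) ℂ)‖ *
            ‖(g : Matrix (Fin n) (Fin n) ℂ) - (h : Matrix (Fin n) (Fin n) ℂ)‖ := by
          calc ε ≤ dist ((k⁻¹ : GL (Fin n) ℂ) : Matrix (Fin n) (Fin n) ℂ) 1 := hcase2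
          _ = ‖((k⁻¹ : GL (Fin n) ℂ) : Matrix (Fin n) (Fin n) ℂ) - 1‖ := dist_eq_norm _ _
          _ = ‖((h⁻¹ : GL (Fin n) ℂ) : Matrix (Fin n) (Fin n) ℂ) *
                ((g : Matrix (Fin n) (Fin n) ℂ) - (h : Matrix (Fin n) (Fin n) ℂ))‖ := by
                rw [heq]
          _ ≤ _ := norm_mul_le _ _
        have h2 : ‖(g : Matrix (Fin n) (Fin n) ℂ) - (h : Matrix (Fin n) (Fin n) ℂ)‖ = d := by
          rw [hd_def, dist_eq_norm]
        calc ε ≤ ‖((h⁻¹ : GL (Fin n) ℂ) : Matrix (Fin n) (Fin n) ℂ)‖ *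
            ‖(g : Matrix (Fin n) (Fin n) ℂ) - (h : Matrix (Fin n) (Fin n) ℂ)‖ := h1
        _ ≤ R ^ m * d := by
            rw [h2]
            exact mul_le_mul_of_nonneg_right (hbound h hh).2 hd0
    rw [div_le_iff₀ hRm_pos]
    linarith [key]
  -- the pair set is nonempty
  have hpairs : {r : ℝ | ∃ p ∈ A, ∃ q ∈ A, p ≠ q ∧ r = dist p q}.Nonempty := by
    have h1 : 1 < A.ncard := by omega
    obtain ⟨p, hp, q, hq, hpq⟩ := (Set.one_lt_ncard hfinA).mp h1
    exact ⟨dist p q, p, hp, q, hq, hpq, rfl⟩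
  have hsepge : ε / R ^ m ≤ sepDist A := by
    apply le_csInf hpairs
    rintro r ⟨p, hp, q, hq, hpq, rfl⟩
    exact hsep p hp q hq hpq
  have hseppos : 0 < sepDist A := lt_of_lt_of_le (by positivity) hsepge
  have hsepnn : 0 ≤ sepDist A := le_of_lt hseppos
  -- ratio bound
  set T : ℝ := 2 / ε * (R ^ m * R ^ m) with hT_def
  have hTpos : 0 < T := by positivity
  have hratio : Metric.diam A / sepDist A ≤ T := by
    have h1 : Metric.diam A / sepDist A ≤ (2 * R ^ m) / (ε / R ^ m) :=
      div_le_div₀ (by positivity) hdiam (by positivity) hsepge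
    have h2 : (2 * R ^ m) / (ε / R ^ m) = T := by
      rw [hT_def]; field_simp
    linarith [h1, h2 ▸ h1]
  -- final estimate
  refine ⟨A, ?_, hfinA, ?_, hseppos, hA2, ?_⟩
  · rintro _ ⟨g, hg, rfl⟩
    exact ⟨g, hmemΓ g hg, rfl⟩
  · exact (Metric.isBounded_closedBall (x := (0 : Matrix (Fin n) (Fin n) ℂ))
      (r := R ^ m)).subset (fun x hx => mem_closedBall_zero_iff.mpr (hnormA x hx))
  · have hdiamnn : 0 ≤ Metric.diam A := Metric.diam_nonneg
    have hstep1 : K * (Metric.diam A / sepDist A) ^ β ≤ K * T ^ β := by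
      apply mul_le_mul_of_nonneg_left _ (le_of_lt hK)
      exact Real.rpow_le_rpow (by positivity) hratio (le_of_lt hβ)
    have hstep2 : K * T ^ β < C ^ m := by
      have hKT : K * T ^ β = Real.exp (Real.log K + Real.log T * β) := by
        rw [Real.exp_add, Real.exp_log hK, ← Real.rpow_def_of_pos hTpos]
      have hCmexp : (C : ℝ) ^ m = Real.exp ((m : ℝ) * Real.log C) := by
        rw [← Real.log_pow, Real.exp_log hCmpos]
      rw [hKT, hCmexp]
      apply Real.exp_lt_exp.mpr
      have hlogT : Real.log T = Real.log (2 / ε) + 2 * (m : ℝ) * Real.log R := by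
        rw [hT_def, Real.log_mul (by positivity) (by positivity),
          Real.log_mul (by positivity) (by positivity), Real.log_pow]
        push_cast
        ring
      rw [hlogT]
      have := hmx
      rw [hx_def, ha_def] at this
      nlinarith [this]
    calc K * (Metric.diam A / sepDist A) ^ β ≤ K * T ^ β := hstep1
    _ < C ^ m := hstep2
    _ ≤ (A.ncard : ℝ) := hCm
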